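/- Let e ∈ ℝⁿ with |e| = 1 and let p ∈ [p_min, p_max] with 1 < p_min ≤ p_max < ∞. Then there exist constants C₅, C₆ > 0 depending only on p_max such that for all ξ ∈ ℝⁿ, ⟨|ξ+e|^{p-2}(ξ+e), ξ⟩ ≥ C₅|ξ|^p - C₆. -/

import Mathlib

open Real

/-- Coercivity of `A(x,ξ) = |ξ+e|^{p-2}(ξ+e)`: for `|e|=1` and
`1 < p_min ≤ p ≤ p_max < ∞`, there exist `C₅, C₆ > 0`, depending only on `p_max`,
such that `⟨|ξ+e|^{p-2}(ξ+e), ξ⟩ ≥ C₅|ξ|^p - C₆` for all `ξ`. -/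
theorem coercivity_estimate (n : ℕ) (pmin pmax p : ℝ) (h1 : 1 < pmin)
    (h2 : pmin ≤ p) (h3 : p ≤ pmax) (e : EuclideanSpace ℝ (Fin n)) (he : ‖e‖ = 1) :
    ∃ C₅ C₆ : ℝ, 0 < C₅ ∧ 0 < C₆ ∧ ∀ ξ : EuclideanSpace ℝ (Fin n),
      (inner ℝ ((‖ξ + e‖ ^ (p - 2) : ℝ) • (ξ + e)) ξ : ℝ) ≥ C₅ * ‖ξ‖ ^ p - C₆ := by
  have hp1 : 1 < p := lt_of_lt_of_le h1 h2
  have hpmax1 : 1 < pmax := lt_of_lt_of_le hp1 h3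
  set C₅ : ℝ := (2:ℝ) ^ (-(pmax+1)) with hC5
  set C₆ : ℝ := (2:ℝ)^pmax + C₅ * (3:ℝ)^pmax + 1 with hC6
  have hC5pos : 0 < C₅ := rpow_pos_of_pos two_pos _
  have h2pm : (0:ℝ) < (2:ℝ)^pmax := rpow_pos_of_pos two_pos _
  have h3pm : (0:ℝ) < (3:ℝ)^pmax := rpow_pos_of_pos three_pos _
  refine ⟨C₅, C₆, hC5pos, by positivity, ?_⟩
  intro ξ
  set t := ‖ξ + e‖ with ht
  set s := ‖ξ‖ with hs
  have ht0 : 0 ≤ t := norm_nonneg _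
  have hs0 : 0 ≤ s := norm_nonneg _
  have hst : s ≤ t + 1 := by
    have : ‖(ξ + e) - e‖ ≤ ‖ξ + e‖ + ‖e‖ := norm_sub_le _ _
    rw [add_sub_cancel_right, he] at this
    exact this
  have hinner : (inner ℝ (ξ + e) ξ : ℝ) ≥ t^2 - t := by
    have h1' : (inner ℝ (ξ + e) ξ : ℝ)
        = (inner ℝ (ξ+e) (ξ+e) : ℝ) - inner ℝ (ξ+e) e := by
      rw [← inner_sub_right]
      congr 1
      abel
    have h2' : (inner ℝ (ξ+e) (ξ+e) : ℝ) = t^2 := real_inner_self_eq_norm_sq _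
    have h3' : (inner ℝ (ξ+e) e : ℝ) ≤ t := by
      have := real_inner_le_norm (ξ+e) e
      rw [he, mul_one] at this
      exact this
    linarith
  have hLHS : (inner ℝ ((t ^ (p - 2) : ℝ) • (ξ + e)) ξ : ℝ) ≥ t^(p-2) * (t^2 - t) := by
    rw [real_inner_smul_left]
    exact mul_le_mul_of_nonneg_left hinner (rpow_nonneg ht0 _)
  have key : ∀ u : ℝ, 0 < u → u^(p-2) * (u^2 - u) = u^(p-1) * (u - 1) := by
    intro u hu
    have h : u^(p-1) = u^(p-2) * u := by
      rw [show p - 1 = (p-2) + 1 by ring, Real.rpow_add_one hu.ne']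
    rw [h]; ring
  rcases le_or_gt t 2 with hle | hgt
  · -- small case
    have hA : t^(p-2) * (t^2 - t) ≥ -(2:ℝ)^pmax := by
      rcases eq_or_lt_of_le ht0 with h0 | h0
      · rw [← h0]
        norm_num
        positivity
      · rw [key t h0]
        have hb : t^(p-1) ≤ (2:ℝ)^pmax := by
          calc t^(p-1) ≤ (2:ℝ)^(p-1) :=
                Real.rpow_le_rpow ht0 hle (by linarith)
          _ ≤ (2:ℝ)^pmax :=
                Real.rpow_le_rpow_of_exponent_le one_le_two (by linarith)
        nlinarith [Real.rpow_nonneg ht0 (p-1)]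
    have hsp : s^p ≤ (3:ℝ)^pmax := by
      calc s^p ≤ (3:ℝ)^p := Real.rpow_le_rpow hs0 (by linarith) (by linarith)
      _ ≤ (3:ℝ)^pmax := Real.rpow_le_rpow_of_exponent_le (by norm_num) h3
    have hmul : C₅ * s^p ≤ C₅ * (3:ℝ)^pmax :=
      mul_le_mul_of_nonneg_left hsp hC5pos.le
    have := hLHS
    rw [hC6]
    linarith
  · -- large case
    have h0 : (0:ℝ) < t := by linarith
    have htp : t^(p-1) * t = t^p := by
      rw [← Real.rpow_add_one h0.ne']
      ring_nf
    have hstep : t^(p-2) * (t^2 - t) ≥ t^p / 2 := by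
      rw [key t h0]
      have h1' : t - 1 ≥ t / 2 := by linarith
      have h2' : t^(p-1) * (t - 1) ≥ t^(p-1) * (t / 2) :=
        mul_le_mul_of_nonneg_left h1' (rpow_nonneg ht0 _)
      have : t^(p-1) * (t / 2) = t^p / 2 := by rw [← htp]; ring
      linarith
    have hsp : s^p ≤ (2:ℝ)^pmax * t^p := by
      have hs2t : s ≤ 2 * t := by linarith
      calc s^p ≤ (2*t)^p := Real.rpow_le_rpow hs0 hs2t (by linarith)
      _ = (2:ℝ)^p * t^p := Real.mul_rpow (by norm_num) ht0
      _ ≤ (2:ℝ)^pmax * t^p := by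
          have : (2:ℝ)^p ≤ (2:ℝ)^pmax :=
            Real.rpow_le_rpow_of_exponent_le one_le_two h3
          exact mul_le_mul_of_nonneg_right this (rpow_nonneg ht0 _)
    have hC : C₅ * ((2:ℝ)^pmax * t^p) = t^p / 2 := by
      rw [← mul_assoc, hC5, ← Real.rpow_add two_pos]
      norm_num
      ring
    have hmul : C₅ * s^p ≤ C₅ * ((2:ℝ)^pmax * t^p) :=
      mul_le_mul_of_nonneg_left hsp hC5pos.le
    have hC6pos : 0 < C₆ := by rw [hC6]; positivity
    linarith
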